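/- Let m = ord₀ Q > 0 and suppose two companion systems with potentials Q, Q' (both of Poincaré rank k) are formally gauge equivalent by an invertible formal transformation. Then ord₀(Q'−Q) ≥ min{k+m, 3k+1}; if moreover the transformation is tangent to identity then ord₀(Q'−Q) ≥ min{k+m+1, 3k+1}. -/

import Mathlib

/-- The operator `x^{k+1}·d/dx` on formal power series. -/
noncomputable def Dop (k : ℕ) (f : PowerSeries ℂ) : PowerSeries ℂ :=
  PowerSeries.X ^ (k+1) * f.derivativeFun

open PowerSeries

lemma derivFun_add' (f g : PowerSeries ℂ) :
    (f + g).derivativeFun = f.derivativeFun + g.derivativeFun :=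
  derivativeFun_add f g

lemma derivFun_sub' (f g : PowerSeries ℂ) :
    (f - g).derivativeFun = f.derivativeFun - g.derivativeFun := by
  ext n
  exact congrArg (coeff n) ((derivative ℂ).map_sub f g)

lemma Dop_add (k : ℕ) (f g : PowerSeries ℂ) : Dop k (f + g) = Dop k f + Dop k g := by
  simp [Dop, derivativeFun_add, mul_add]

lemma Dop_sub (k : ℕ) (f g : PowerSeries ℂ) : Dop k (f - g) = Dop k f - Dop k g := by
  simp [Dop, derivFun_sub', mul_sub]

lemma derivFun_neg' (f : PowerSeries ℂ) : (-f).derivativeFun = -f.derivativeFun := by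
  ext n
  exact congrArg (coeff n) ((derivative ℂ).map_neg f)

lemma Dop_neg (k : ℕ) (f : PowerSeries ℂ) : Dop k (-f) = -Dop k f := by
  simp [Dop, derivFun_neg']

lemma Dop_mul (k : ℕ) (f g : PowerSeries ℂ) :
    Dop k (f * g) = Dop k f * g + f * Dop k g := by
  simp only [Dop, derivativeFun_mul, smul_eq_mul]
  ring

lemma order_derivFun (f : PowerSeries ℂ) (n : ℕ) (h : (n : ℕ∞) ≤ f.order) :
    ((n - 1 : ℕ) : ℕ∞) ≤ f.derivativeFun.order := by
  apply le_order
  intro i hi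
  have hi' : i < n - 1 := by exact_mod_cast hi
  rw [show (coeff i) f.derivativeFun = coeff (i+1) f * (i+1) from coeff_derivative f i]
  have : ((i + 1 : ℕ) : ℕ∞) < f.order := lt_of_lt_of_le (by exact_mod_cast (by omega : i + 1 < n)) h
  rw [coeff_of_lt_order _ this, zero_mul]

lemma ord_Dop (k n : ℕ) (f : PowerSeries ℂ) (h : (n : ℕ∞) ≤ f.order) :
    ((k + max n 1 : ℕ) : ℕ∞) ≤ (Dop k f).order := by
  rw [Dop, order_mul, order_X_pow]
  have h1 : ((max n 1 - 1 : ℕ) : ℕ∞) ≤ f.derivativeFun.order := by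
    rcases Nat.eq_zero_or_pos n with hn0 | hn1
    · simp [hn0]
    · have : max n 1 = n := by omega
      rw [this]
      exact order_derivFun f n h
  calc ((k + max n 1 : ℕ) : ℕ∞) = ((k + 1 : ℕ) : ℕ∞) + ((max n 1 - 1 : ℕ) : ℕ∞) := by
        rw [← Nat.cast_add]; congr 1; omega
    _ ≤ ((k + 1 : ℕ) : ℕ∞) + f.derivativeFun.order := by
        exact add_le_add le_rfl h1
    _ = (↑(k + 1) : ℕ∞) + f.derivativeFun.order := by norm_cast

/-- Core order estimate from the combined reduced equation. -/
lemma core (k m t : ℕ) (ht : t ≤ 1) (hm : 0 < m) (Q Q' a b : PowerSeries ℂ)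
    (hord : Q.order = m) (ha : PowerSeries.constantCoeff a ≠ 0)
    (hb : (t : ℕ∞) ≤ b.order)
    (H : (Q' - Q) * a + (Q' - Q) * a =
        (Dop k Q * b + Dop k Q * b) + ((Q + Q') * Dop k b + (Q + Q') * Dop k b)
          + Dop k (Q' - Q) * b - Dop k (Dop k (Dop k b))) :
    ((min (k + m + t) (3 * k + 1) : ℕ) : ℕ∞) ≤ (Q' - Q).order := by
  set R := Q' - Q with hRdef
  by_contra hcon
  push_neg at hcon
  have htop : R.order ≠ ⊤ := by
    intro hT; rw [hT] at hcon; exact (not_top_lt hcon)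
  obtain ⟨n, hn⟩ : ∃ n : ℕ, R.order = (n : ℕ∞) := by
    lift R.order to ℕ using htop with n; exact ⟨n, rfl⟩
  rw [hn] at hcon
  have hnlt : n < min (k + m + t) (3 * k + 1) := by exact_mod_cast hcon
  have hn1 : n < k + m + t := lt_of_lt_of_le hnlt (min_le_left _ _)
  have hn2 : n ≤ 3 * k := by have := lt_of_lt_of_le hnlt (min_le_right _ _); omega
  -- order a = 0
  have horda : a.order = 0 := by
    rw [show ((0:ℕ∞)) = ((0:ℕ):ℕ∞) by rfl, order_eq_nat]
    simpa using ha
  -- LHS coefficient at n is nonzero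
  have hRA : (R * a).order = (n : ℕ∞) := by rw [order_mul, horda, hn, add_zero]
  have hL : (PowerSeries.coeff n) (R * a) ≠ 0 := (order_eq_nat.mp hRA).1
  -- order bounds for the right-hand side terms
  have hQm : (m : ℕ∞) ≤ Q.order := le_of_eq hord.symm
  have hRn : (n : ℕ∞) ≤ R.order := le_of_eq hn.symm
  -- T1 : Dop k Q * b
  have hT1 : ((n : ℕ) : ℕ∞) < (Dop k Q * b).order := by
    have h1 : ((k + max m 1 : ℕ) : ℕ∞) ≤ (Dop k Q).order := ord_Dop k m Q hQm
    have h2 : ((k + max m 1 + t : ℕ) : ℕ∞) ≤ (Dop k Q * b).order := by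
      rw [order_mul, Nat.cast_add]
      exact add_le_add h1 hb
    refine lt_of_lt_of_le ?_ h2
    have : max m 1 = m := by omega
    exact_mod_cast (by omega : n < k + max m 1 + t)
  -- T2 : (Q + Q') * Dop k b
  have hT2 : ((n : ℕ) : ℕ∞) < ((Q + Q') * Dop k b).order := by
    have hQ' : ((min m n : ℕ) : ℕ∞) ≤ Q'.order := by
      have : Q' = Q + R := by rw [hRdef]; ring
      rw [this]
      refine le_trans ?_ (min_order_le_order_add Q R)
      rw [hn, hord]
      exact le_min (by exact_mod_cast min_le_left m n) (by exact_mod_cast min_le_right m n)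
    have hsum : ((min m n : ℕ) : ℕ∞) ≤ (Q + Q').order := by
      refine le_trans ?_ (min_order_le_order_add Q Q')
      refine le_min ?_ hQ'
      rw [hord]; exact_mod_cast min_le_left m n
    have hDb : ((k + max t 1 : ℕ) : ℕ∞) ≤ (Dop k b).order := ord_Dop k t b hb
    have h2 : ((min m n + (k + max t 1) : ℕ) : ℕ∞) ≤ ((Q + Q') * Dop k b).order := by
      rw [order_mul, Nat.cast_add]
      exact add_le_add hsum hDb
    refine lt_of_lt_of_le ?_ h2
    have hmax : max t 1 = 1 := by omega
    exact_mod_cast (by omega : n < min m n + (k + max t 1))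
  -- T3 : Dop k R * b
  have hT3 : ((n : ℕ) : ℕ∞) < (Dop k R * b).order := by
    have h1 : ((k + max n 1 : ℕ) : ℕ∞) ≤ (Dop k R).order := ord_Dop k n R hRn
    have h2 : ((k + max n 1 + t : ℕ) : ℕ∞) ≤ (Dop k R * b).order := by
      rw [order_mul, Nat.cast_add]
      exact add_le_add h1 hb
    refine lt_of_lt_of_le ?_ h2
    have hx1 : n ≤ max n 1 := le_max_left _ _
    have hx2 : 1 ≤ max n 1 := le_max_right _ _
    exact_mod_cast (by omega : n < k + max n 1 + t)
  -- T4 : Dop³ b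
  have hT4 : ((n : ℕ) : ℕ∞) < (Dop k (Dop k (Dop k b))).order := by
    have h1 : ((k + max t 1 : ℕ) : ℕ∞) ≤ (Dop k b).order := ord_Dop k t b hb
    have h1' : ((k + 1 : ℕ) : ℕ∞) ≤ (Dop k b).order := by
      refine le_trans ?_ h1
      exact_mod_cast (by omega : k + 1 ≤ k + max t 1)
    have h2 : ((k + max (k+1) 1 : ℕ) : ℕ∞) ≤ (Dop k (Dop k b)).order := ord_Dop k (k+1) _ h1'
    have h2' : ((2*k + 1 : ℕ) : ℕ∞) ≤ (Dop k (Dop k b)).order := by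
      refine le_trans ?_ h2
      exact_mod_cast (by omega : 2*k+1 ≤ k + max (k+1) 1)
    have h3 : ((k + max (2*k+1) 1 : ℕ) : ℕ∞) ≤ (Dop k (Dop k (Dop k b))).order :=
      ord_Dop k (2*k+1) _ h2'
    refine lt_of_lt_of_le ?_ h3
    exact_mod_cast (by omega : n < k + max (2*k+1) 1)
  -- take the n-th coefficient of H
  have hcoeff := congrArg (PowerSeries.coeff n) H
  have z1 : (PowerSeries.coeff n) (Dop k Q * b) = 0 := coeff_of_lt_order n hT1
  have z2 : (PowerSeries.coeff n) ((Q + Q') * Dop k b) = 0 := coeff_of_lt_order n hT2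
  have z3 : (PowerSeries.coeff n) (Dop k R * b) = 0 := coeff_of_lt_order n hT3
  have z4 : (PowerSeries.coeff n) (Dop k (Dop k (Dop k b))) = 0 := coeff_of_lt_order n hT4
  simp only [map_add, map_sub, z1, z2, z3, z4, add_zero, zero_add, sub_zero] at hcoeff
  exact hL (add_self_eq_zero.mp hcoeff)


/-- if `ord₀ Q = m > 0` and two companion systems with potentials
`Q, Q'` are formally gauge equivalent (the transformation `T = aI + b[[0,1],[Q,0]]
+ c[[0,0],[1,0]] + d[[1,0],[0,−1]]` satisfying the four conjugation equations being
invertible, i.e. `a(0) ≠ 0`), then `ord₀(Q'−Q) ≥ min{k+m, 3k+1}`; if moreover the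
transformation is tangent to identity (`a(0)=1`, `b(0)=0`) then
`ord₀(Q'−Q) ≥ min{k+m+1, 3k+1}`. -/
theorem stmt_9 (k m : ℕ) (hm : 0 < m) (Q Q' a b c d : PowerSeries ℂ)
    (hord : Q.order = m)
    (e1 : Dop k b = -2 * d)
    (e2 : Dop k (a + d) = c)
    (e3 : Dop k (a - d) = -c + (Q' - Q) * b)
    (e4 : Dop k (Q * b + c) = (Q' + Q) * d + (Q' - Q) * a) :
    (PowerSeries.constantCoeff a ≠ 0 →
       ((min (k + m) (3 * k + 1) : ℕ) : ℕ∞) ≤ (Q' - Q).order) ∧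
    (PowerSeries.constantCoeff a = 1 → PowerSeries.constantCoeff b = 0 →
       ((min (k + m + 1) (3 * k + 1) : ℕ) : ℕ∞) ≤ (Q' - Q).order) := by
  -- derive the combined identity
  have e2' : Dop k a + Dop k d = c := by rw [← Dop_add]; exact e2
  have e3' : Dop k a - Dop k d = -c + (Q' - Q) * b := by rw [← Dop_sub]; exact e3
  have h5 : Dop k a + Dop k a = (Q' - Q) * b := by linear_combination e2' + e3'
  have h6 : Dop k (Dop k a) + Dop k (Dop k a)
      = Dop k (Q' - Q) * b + (Q' - Q) * Dop k b := by
    have := congrArg (Dop k) h5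
    rwa [Dop_add, Dop_mul] at this
  have e1' : Dop k b = -(d + d) := by linear_combination e1
  have h7 : Dop k (Dop k b) = -(Dop k d + Dop k d) := by
    have := congrArg (Dop k) e1'
    rwa [Dop_neg, Dop_add] at this
  have h8 : Dop k (Dop k (Dop k b)) = -(Dop k (Dop k d) + Dop k (Dop k d)) := by
    have := congrArg (Dop k) h7
    rwa [Dop_neg, Dop_add] at this
  have e4' : Dop k Q * b + Q * Dop k b + (Dop k (Dop k a) + Dop k (Dop k d))
      = (Q' + Q) * d + (Q' - Q) * a := by
    have := e4
    rw [Dop_add, Dop_mul] at this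
    rw [show c = Dop k a + Dop k d from e2'.symm, Dop_add] at this
    linear_combination this
  have H : (Q' - Q) * a + (Q' - Q) * a =
      (Dop k Q * b + Dop k Q * b) + ((Q + Q') * Dop k b + (Q + Q') * Dop k b)
        + Dop k (Q' - Q) * b - Dop k (Dop k (Dop k b)) := by
    linear_combination (-2) * e4' + h6 + h8 - (Q' + Q) * e1'
  constructor
  · intro ha
    have := core k m 0 (by omega) hm Q Q' a b hord ha (by simp) H
    simpa using this
  · intro ha hb
    have ha' : PowerSeries.constantCoeff a ≠ 0 := by rw [ha]; exact one_ne_zero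
    have hb' : ((1:ℕ) : ℕ∞) ≤ b.order := by
      apply le_order
      intro i hi
      have : i = 0 := by exact_mod_cast Nat.lt_one_iff.mp (by exact_mod_cast hi)
      rw [this, coeff_zero_eq_constantCoeff]
      exact hb
    exact core k m 1 le_rfl hm Q Q' a b hord ha' hb' H
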